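/- Let v̲ ≤ v̄ be reals, let f : ℝ → ℝ be a nonnegative measurable probability density supported on [v̲, v̄] with CDF F, and let π : [v̲, v̄] → ℝ be bounded and measurable. Then ∫_{v̲}^{v̄} [ v·π(v) − ∫_{v̲}^{v} π(s) ds ] f(v) dv = ∫_{v̲}^{v̄} π(v) · ( v·f(v) − (1 − F(v)) ) dv. In particular, if f > 0 on [v̲, v̄] and φ(v) = v − (1 − F(v))/f(v), this equals ∫_{v̲}^{v̄} φ(v) π(v) f(v) dv. -/

import Mathlib

open MeasureTheory Set

lemma triangle_swap (π₀ f₀ : ℝ → ℝ) (hπm : Measurable π₀) (hfm : Measurable f₀)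
    (hπ : Integrable π₀) (hf : Integrable f₀) :
    ∫ v, (∫ s in Iic v, π₀ s) * f₀ v = ∫ s, π₀ s * ∫ v in Ici s, f₀ v := by
  set g : ℝ → ℝ → ℝ := fun s v => {q : ℝ × ℝ | q.1 ≤ q.2}.indicator
      (fun q => π₀ q.1 * f₀ q.2) (s, v) with hg
  have hTm : MeasurableSet {q : ℝ × ℝ | q.1 ≤ q.2} :=
    measurableSet_le measurable_fst measurable_snd
  have hgm : Measurable (Function.uncurry g) := by
    have : Function.uncurry g = {q : ℝ × ℝ | q.1 ≤ q.2}.indicator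
        (fun q => π₀ q.1 * f₀ q.2) := rfl
    rw [this]
    exact ((hπm.comp measurable_fst).mul (hfm.comp measurable_snd)).indicator hTm
  have hgi : Integrable (Function.uncurry g) ((volume : Measure ℝ).prod volume) := by
    refine Integrable.mono' (hπ.abs.mul_prod hf.abs) hgm.aestronglyMeasurable
      (ae_of_all _ fun p => ?_)
    by_cases hp : p ∈ {q : ℝ × ℝ | q.1 ≤ q.2}
    · simp only [Function.uncurry, hg, indicator_of_mem hp, Real.norm_eq_abs, abs_mul]; exact le_rfl
    · simp only [Function.uncurry, hg, indicator_of_notMem hp, norm_zero]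
      positivity
  have hswap := integral_integral_swap hgi
  have h1 : ∀ v, (fun s => g s v) = (Iic v).indicator (fun s => π₀ s * f₀ v) := by
    intro v; funext s
    by_cases hs : s ≤ v
    · simp [hg, indicator_of_mem, hs]
    · simp [hg, indicator_of_notMem, hs]
  have h2 : ∀ s, (fun v => g s v) = (Ici s).indicator (fun v => π₀ s * f₀ v) := by
    intro s; funext v
    by_cases hs : s ≤ v
    · simp [hg, indicator_of_mem, hs]
    · simp [hg, indicator_of_notMem, hs]
  calc ∫ v, (∫ s in Iic v, π₀ s) * f₀ v
      = ∫ v, ∫ s, g s v := by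
        congr 1; funext v
        rw [h1 v, integral_indicator measurableSet_Iic, integral_mul_const]
    _ = ∫ s, ∫ v, g s v := hswap.symm
    _ = ∫ s, π₀ s * ∫ v in Ici s, f₀ v := by
        congr 1; funext s
        rw [h2 s, integral_indicator measurableSet_Ici, integral_const_mul]

theorem stmt_6
    (vl vh : ℝ) (hle : vl ≤ vh)
    (f : ℝ → ℝ) (hf_meas : Measurable f) (hf_nonneg : ∀ v, 0 ≤ f v)
    (hf_prob : ∫ v, f v = 1) (hf_supp : Function.support f ⊆ Icc vl vh)
    (π : ℝ → ℝ) (hπ_meas : Measurable π)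
    (C : ℝ) (hπ_bdd : ∀ v ∈ Icc vl vh, |π v| ≤ C) :
    (∫ v in vl..vh, (v * π v - ∫ s in vl..v, π s) * f v =
      ∫ v in vl..vh, π v * (v * f v - (1 - ∫ s in Iic v, f s))) ∧
    ((∀ v ∈ Icc vl vh, 0 < f v) →
      ∫ v in vl..vh, (v * π v - ∫ s in vl..v, π s) * f v =
        ∫ v in vl..vh, (v - (1 - ∫ s in Iic v, f s) / f v) * π v * f v) := by
  have hC0 : 0 ≤ C := le_trans (abs_nonneg _) (hπ_bdd vl ⟨le_refl _, hle⟩)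
  have hfi : Integrable f := by
    by_contra h
    rw [integral_undef h] at hf_prob; norm_num at hf_prob
  set π₀ : ℝ → ℝ := (Ioc vl vh).indicator π with hπ₀def
  set f₀ : ℝ → ℝ := (Ioc vl vh).indicator f with hf₀def
  have hπ₀m : Measurable π₀ := hπ_meas.indicator measurableSet_Ioc
  have hf₀m : Measurable f₀ := hf_meas.indicator measurableSet_Ioc
  have hπ₀C : ∀ x, ‖π₀ x‖ ≤ C := by
    intro x
    by_cases hx : x ∈ Ioc vl vh
    · rw [hπ₀def, indicator_of_mem hx, Real.norm_eq_abs]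
      exact hπ_bdd x ⟨hx.1.le, hx.2⟩
    · rw [hπ₀def, indicator_of_notMem hx, norm_zero]; exact hC0
  have hπ₀i : Integrable π₀ := by
    refine Integrable.mono' (g := (Ioc vl vh).indicator fun _ => C) ?_
      hπ₀m.aestronglyMeasurable (ae_of_all _ fun x => ?_)
    · exact (integrable_indicator_iff measurableSet_Ioc).2
        (integrableOn_const measure_Ioc_lt_top.ne)
    · by_cases hx : x ∈ Ioc vl vh
      · rw [hπ₀def, indicator_of_mem hx, indicator_of_mem hx, Real.norm_eq_abs]
        exact hπ_bdd x ⟨hx.1.le, hx.2⟩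
      · rw [hπ₀def, indicator_of_notMem hx, indicator_of_notMem hx, norm_zero]
  have hf₀i : Integrable f₀ := hfi.indicator measurableSet_Ioc
  -- the CDF
  set F : ℝ → ℝ := fun v => ∫ s in Iic v, f s with hFdef
  have hFmono : Monotone F := fun a b hab =>
    setIntegral_mono_set hfi.integrableOn (ae_of_all _ hf_nonneg)
      (HasSubset.Subset.eventuallyLE (Iic_subset_Iic.2 hab))
  have hFm : Measurable F := hFmono.measurable
  have hF0 : ∀ v, 0 ≤ F v := fun v =>
    setIntegral_nonneg measurableSet_Iic fun x _ => hf_nonneg x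
  have hF1 : ∀ v, F v ≤ 1 := fun v =>
    hf_prob ▸ setIntegral_le_integral hfi (ae_of_all _ hf_nonneg)
  -- tail identity
  have hB : ∀ v ∈ Ioc vl vh, ∫ x in Ioc v vh, f x = 1 - F v := by
    intro v hv
    have h1 : ∫ x in Iic vh, f x = 1 := by
      rw [setIntegral_eq_integral_of_forall_compl_eq_zero (fun x hx => ?_), hf_prob]
      by_contra h
      exact hx ((hf_supp h).2)
    have h2 : (∫ x in Iic v, f x) + ∫ x in Ioc v vh, f x = ∫ x in Iic vh, f x := by
      rw [← Iic_union_Ioc_eq_Iic hv.2]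
      exact (setIntegral_union (Iic_disjoint_Ioc le_rfl) measurableSet_Ioc
        hfi.integrableOn hfi.integrableOn).symm
    rw [h1] at h2
    simp only [hFdef]; linarith
  -- Fubini identity
  have hT := triangle_swap π₀ f₀ hπ₀m hf₀m hπ₀i hf₀i
  have hTL : ∫ v, (∫ s in Iic v, π₀ s) * f₀ v
      = ∫ v in Ioc vl vh, (∫ s in vl..v, π s) * f v := by
    have : (fun v => (∫ s in Iic v, π₀ s) * f₀ v)
        = (Ioc vl vh).indicator fun v => (∫ s in Iic v, π₀ s) * f v := by
      funext v
      by_cases hv : v ∈ Ioc vl vh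
      · rw [indicator_of_mem hv, hf₀def, indicator_of_mem hv]
      · rw [indicator_of_notMem hv, hf₀def, indicator_of_notMem hv, mul_zero]
    rw [this, integral_indicator measurableSet_Ioc]
    refine setIntegral_congr_fun measurableSet_Ioc fun v hv => ?_
    congr 1
    rw [hπ₀def, setIntegral_indicator measurableSet_Ioc, inter_comm,
      Ioc_inter_Iic, min_eq_right hv.2, intervalIntegral.integral_of_le hv.1.le]
  have hTR : ∫ s, π₀ s * ∫ v in Ici s, f₀ v
      = ∫ s in Ioc vl vh, π s * (1 - F s) := by
    have : (fun s => π₀ s * ∫ v in Ici s, f₀ v)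
        = (Ioc vl vh).indicator fun s => π s * ∫ v in Ici s, f₀ v := by
      funext s
      by_cases hs : s ∈ Ioc vl vh
      · rw [indicator_of_mem hs, hπ₀def, indicator_of_mem hs]
      · rw [indicator_of_notMem hs, hπ₀def, indicator_of_notMem hs, zero_mul]
    rw [this, integral_indicator measurableSet_Ioc]
    refine setIntegral_congr_fun measurableSet_Ioc fun s hs => ?_
    congr 1
    rw [hf₀def, setIntegral_indicator measurableSet_Ioc]
    have hset : Ici s ∩ Ioc vl vh = Icc s vh := by
      ext x
      simp only [mem_inter_iff, mem_Ici, mem_Ioc, mem_Icc]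
      constructor
      · rintro ⟨h1, _, h3⟩; exact ⟨h1, h3⟩
      · rintro ⟨h1, h2⟩; exact ⟨h1, lt_of_lt_of_le hs.1 h1, h2⟩
    rw [hset, integral_Icc_eq_integral_Ioc, hB s hs]
  -- key identity
  have hkey : ∫ v in Ioc vl vh, (∫ s in vl..v, π s) * f v
      = ∫ s in Ioc vl vh, π s * (1 - F s) := by rw [← hTL, ← hTR, hT]
  -- integrability facts
  have hI1 : IntegrableOn (fun v => v * π v * f v) (Ioc vl vh) := by
    refine Integrable.mono' ((hfi.integrableOn).const_mul ((|vl| + |vh|) * C))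
      ((measurable_id.mul hπ_meas).mul hf_meas).aestronglyMeasurable
      ((ae_restrict_iff' measurableSet_Ioc).2 (ae_of_all _ fun v hv => ?_))
    have hv1 : |v| ≤ |vl| + |vh| := by
      rcases abs_le.1 (le_refl |vl|) with ⟨h1, _⟩
      rcases abs_le.1 (le_refl |vh|) with ⟨_, h2⟩
      rw [abs_le]; constructor <;> nlinarith [hv.1.le, hv.2, abs_nonneg vl, abs_nonneg vh]
    have := hπ_bdd v ⟨hv.1.le, hv.2⟩
    rw [Real.norm_eq_abs, abs_mul, abs_mul, abs_of_nonneg (hf_nonneg v)]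
    have h0 : 0 ≤ |π v| := abs_nonneg _
    have hmm : |v| * |π v| ≤ (|vl| + |vh|) * C := mul_le_mul hv1 this h0 (by positivity)
    exact mul_le_mul_of_nonneg_right hmm (hf_nonneg v)
  have hP : Continuous fun v => ∫ s in vl..v, π₀ s :=
    intervalIntegral.continuous_primitive (fun a b => hπ₀i.intervalIntegrable) vl
  have hIπ : ∀ v ∈ Ioc vl vh, (∫ s in vl..v, π₀ s) = ∫ s in vl..v, π s := by
    intro v hv
    rw [intervalIntegral.integral_of_le hv.1.le, intervalIntegral.integral_of_le hv.1.le]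
    refine setIntegral_congr_fun measurableSet_Ioc fun s hs => ?_
    exact indicator_of_mem (Ioc_subset_Ioc_right hv.2 hs) π
  have hI2' : IntegrableOn (fun v => (∫ s in vl..v, π₀ s) * f v) (Ioc vl vh) := by
    refine Integrable.mono' ((hfi.integrableOn).const_mul (C * (vh - vl)))
      (hP.measurable.mul hf_meas).aestronglyMeasurable
      ((ae_restrict_iff' measurableSet_Ioc).2 (ae_of_all _ fun v hv => ?_))
    have hb : ‖∫ s in vl..v, π₀ s‖ ≤ C * (vh - vl) := by
      rw [intervalIntegral.integral_of_le hv.1.le]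
      calc ‖∫ s in Ioc vl v, π₀ s‖
          ≤ C * (volume (Ioc vl v)).toReal :=
            norm_setIntegral_le_of_norm_le_const measure_Ioc_lt_top
              (fun x _ => hπ₀C x)
        _ ≤ C * (vh - vl) := by
            rw [Real.volume_Ioc, ENNReal.toReal_ofReal (by linarith [hv.1.le])]
            have := hv.2
            nlinarith [hv.1.le]
    rw [Real.norm_eq_abs, abs_mul, abs_of_nonneg (hf_nonneg v)]
    exact mul_le_mul_of_nonneg_right (Real.norm_eq_abs _ ▸ hb) (hf_nonneg v)
  have hI2 : IntegrableOn (fun v => (∫ s in vl..v, π s) * f v) (Ioc vl vh) :=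
    hI2'.congr_fun (fun v hv => by dsimp only; rw [hIπ v hv]) measurableSet_Ioc
  have hI3 : IntegrableOn (fun v => π v * (v * f v)) (Ioc vl vh) := by
    have : (fun v => π v * (v * f v)) = fun v => v * π v * f v := by funext v; ring
    rw [this]; exact hI1
  have hI4 : IntegrableOn (fun v => π v * (1 - F v)) (Ioc vl vh) := by
    refine Integrable.mono' (g := fun _ => C)
      (integrableOn_const measure_Ioc_lt_top.ne)
      (hπ_meas.mul (measurable_const.sub hFm)).aestronglyMeasurable
      ((ae_restrict_iff' measurableSet_Ioc).2 (ae_of_all _ fun v hv => ?_))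
    rw [Real.norm_eq_abs, abs_mul]
    have h1 : |1 - F v| ≤ 1 := abs_le.2 ⟨by linarith [hF1 v], by linarith [hF0 v]⟩
    have h2 := hπ_bdd v ⟨hv.1.le, hv.2⟩
    calc |π v| * |1 - F v| ≤ C * 1 := mul_le_mul h2 h1 (abs_nonneg _) hC0
      _ = C := mul_one C
  -- part 1
  have part1 : ∫ v in vl..vh, (v * π v - ∫ s in vl..v, π s) * f v =
      ∫ v in vl..vh, π v * (v * f v - (1 - ∫ s in Iic v, f s)) := by
    rw [intervalIntegral.integral_of_le hle, intervalIntegral.integral_of_le hle]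
    have e1 : ∀ v, (v * π v - ∫ s in vl..v, π s) * f v
        = v * π v * f v - (∫ s in vl..v, π s) * f v := fun v => by ring
    have e2 : ∀ v, π v * (v * f v - (1 - ∫ s in Iic v, f s))
        = π v * (v * f v) - π v * (1 - F v) := fun v => by rw [hFdef]; ring
    simp_rw [e1, e2]
    rw [integral_sub hI1 hI2, integral_sub hI3 hI4, hkey]
    congr 1
    exact setIntegral_congr_fun measurableSet_Ioc fun v _ => by ring
  refine ⟨part1, fun hpos => ?_⟩
  rw [part1, intervalIntegral.integral_of_le hle, intervalIntegral.integral_of_le hle]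
  refine setIntegral_congr_fun measurableSet_Ioc fun v hv => ?_
  have hfv : f v ≠ 0 := (hpos v ⟨hv.1.le, hv.2⟩).ne'
  field_simp
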